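/- arXiv:math/0302201 — 3 statements merged into one kernel-verified Lean document; each statement's English description precedes it below -/
import Mathlib

section
/- Let W be a compact open subgroup of G which is tidy for the automorphism α, and let w ∈ W be such that the set {αⁿ(w) : n ≥ 0} is bounded. Then w belongs to W_{α−}, i.e. αⁿ(w) ∈ W for every n ≥ 0. -/
open scoped Pointwise

universe u

variable {G : Type u} [Group G] [TopologicalSpace G] [IsTopologicalGroup G]

/-- `V_{α+} = ⋂_{n ≥ 0} αⁿ(V)`. -/
def plusSet (α : MulAut G) (V : Set G) : Set G := ⋂ n : ℕ, ⇑(α ^ n) '' V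

/-- `V_{α−} = ⋂_{n ≥ 0} α⁻ⁿ(V)`. -/
def minusSet (α : MulAut G) (V : Set G) : Set G := ⋂ n : ℕ, ⇑(α⁻¹ ^ n) '' V

/-- `V_{α++} = ⋃_{n ≥ 0} αⁿ(V_{α+})`. -/
def plusplusSet (α : MulAut G) (V : Set G) : Set G := ⋃ n : ℕ, ⇑(α ^ n) '' plusSet α V

/-- `V` is tidy for `α`: condition T1(α), `V = V_{α+}·V_{α−}`, together with
condition T2(α), `V_{α++}` is closed. -/
def IsTidy (α : MulAut G) (V : Set G) : Prop :=
  V = plusSet α V * minusSet α V ∧ IsClosed (plusplusSet α V)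

/-- `U` is invariably tidy for `𝔞`: for every `γ` in the group generated by `𝔞`,
`γ(U)` is tidy for every `a ∈ 𝔞`. -/
def InvariablyTidy (𝔞 : Set (MulAut G)) (U : Set G) : Prop :=
  ∀ γ ∈ Subgroup.closure 𝔞, ∀ a ∈ 𝔞, IsTidy a (⇑γ '' U)

/-- `U_𝔞 = ⋂_{a ∈ 𝔞} U_{a+}` (set version). -/
def interSet (𝔞 : Set (MulAut G)) (U : Set G) : Set G := ⋂ a ∈ 𝔞, plusSet a U

/-- `H_{α+}` as a subgroup. -/
def plusSub (α : MulAut G) (H : Subgroup G) : Subgroup G :=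
  ⨅ n : ℕ, H.map (MulEquiv.toMonoidHom (α ^ n))

/-- `H_𝔞 = ⋂_{a ∈ 𝔞} H_{a+}` as a subgroup. -/
def interSub (𝔞 : Set (MulAut G)) (H : Subgroup G) : Subgroup G := ⨅ a ∈ 𝔞, plusSub a H

/-- The scale of `α` : the minimum of `[α(V) : α(V) ∩ V]` over compact open subgroups `V`. -/
noncomputable def scale (α : MulAut G) : ℕ :=
  sInf {n : ℕ | ∃ V : Subgroup G, IsCompact (V : Set G) ∧ IsOpen (V : Set G) ∧
    n = V.relIndex (V.map (MulEquiv.toMonoidHom α))}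

set_option linter.unusedSectionVars false


lemma mem_image_pow {α : MulAut G} {V : Set G} {n : ℕ} {x : G} :
    x ∈ ⇑(α ^ n) '' V ↔ (α⁻¹ ^ n) x ∈ V := by
  rw [inv_pow]
  constructor
  · rintro ⟨y, hy, rfl⟩
    rwa [MulAut.inv_apply_self]
  · intro h
    exact ⟨(α ^ n)⁻¹ x, h, MulAut.apply_inv_self _ _ _⟩

lemma mem_plusSet_iff {α : MulAut G} {V : Set G} {x : G} :
    x ∈ plusSet α V ↔ ∀ n : ℕ, (α⁻¹ ^ n) x ∈ V := by
  simp only [plusSet, Set.mem_iInter, mem_image_pow]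

lemma mem_minusSet_iff {α : MulAut G} {V : Set G} {x : G} :
    x ∈ minusSet α V ↔ ∀ n : ℕ, (α ^ n) x ∈ V := by
  simp only [minusSet, Set.mem_iInter, mem_image_pow, inv_inv]

lemma mul_mem_plusSet {α : MulAut G} {W : Subgroup G} {x y : G}
    (hx : x ∈ plusSet α (W : Set G)) (hy : y ∈ plusSet α (W : Set G)) :
    x * y ∈ plusSet α (W : Set G) := by
  rw [mem_plusSet_iff] at hx hy ⊢
  intro n
  rw [map_mul]
  exact W.mul_mem (hx n) (hy n)

lemma inv_mem_plusSet {α : MulAut G} {W : Subgroup G} {x : G}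
    (hx : x ∈ plusSet α (W : Set G)) : x⁻¹ ∈ plusSet α (W : Set G) := by
  rw [mem_plusSet_iff] at hx ⊢
  intro n
  rw [map_inv]
  exact W.inv_mem (hx n)

lemma plusSet_subset_self {α : MulAut G} {V : Set G} : plusSet α V ⊆ V := by
  intro x hx
  have h := mem_plusSet_iff.1 hx 0
  simpa using h

lemma plusSet_subset_image {α : MulAut G} {V : Set G} :
    plusSet α V ⊆ ⇑α '' plusSet α V := by
  intro x hx
  refine ⟨α⁻¹ x, ?_, MulAut.apply_inv_self _ _ _⟩
  rw [mem_plusSet_iff] at hx ⊢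
  intro n
  have h := hx (n + 1)
  rwa [pow_succ, MulAut.mul_apply] at h

lemma image_pow_plusSet_mono (α : MulAut G) (V : Set G) :
    Monotone (fun n : ℕ => ⇑(α ^ n) '' plusSet α V) := by
  apply monotone_nat_of_le_succ
  intro n
  rintro x ⟨y, hy, rfl⟩
  obtain ⟨z, hz, rfl⟩ := plusSet_subset_image hy
  exact ⟨z, hz, by rw [pow_succ, MulAut.mul_apply]⟩

lemma mem_layer_mul {α : MulAut G} {W : Subgroup G} {x y : G} {j k : ℕ}
    (hx : x ∈ ⇑(α ^ j) '' plusSet α (W : Set G))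
    (hy : y ∈ ⇑(α ^ k) '' plusSet α (W : Set G)) :
    x * y ∈ ⇑(α ^ max j k) '' plusSet α (W : Set G) := by
  have hx' := image_pow_plusSet_mono α (W : Set G) (le_max_left j k) hx
  have hy' := image_pow_plusSet_mono α (W : Set G) (le_max_right j k) hy
  obtain ⟨u, hu, rfl⟩ := hx'
  obtain ⟨v, hv, rfl⟩ := hy'
  exact ⟨u * v, mul_mem_plusSet hu hv, map_mul _ _ _⟩

lemma mem_layer_inv {α : MulAut G} {W : Subgroup G} {x : G} {j : ℕ}
    (hx : x ∈ ⇑(α ^ j) '' plusSet α (W : Set G)) :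
    x⁻¹ ∈ ⇑(α ^ j) '' plusSet α (W : Set G) := by
  obtain ⟨u, hu, rfl⟩ := hx
  exact ⟨u⁻¹, inv_mem_plusSet hu, map_inv _ _⟩


theorem stmt1 [LocallyCompactSpace G] [TotallyDisconnectedSpace G] [T2Space G]
    (α : MulAut G) (hα : Continuous ⇑α) (hα' : Continuous ⇑(α⁻¹))
    (W : Subgroup G) (hWc : IsCompact (W : Set G)) (hWo : IsOpen (W : Set G))
    (hW : IsTidy α (W : Set G))
    (w : G) (hw : w ∈ W)
    (hbd : IsCompact (closure (Set.range fun n : ℕ => (α ^ n) w))) :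
    w ∈ minusSet α (W : Set G) ∧ ∀ n : ℕ, (α ^ n) w ∈ W := by
  classical
  obtain ⟨hT1, hT2⟩ := hW
  have hwab : w ∈ plusSet α (W : Set G) * minusSet α (W : Set G) := by
    rw [← hT1]; exact hw
  obtain ⟨a, ha, b, hb, rfl⟩ := hwab
  -- continuity of powers
  have hcont : ∀ n : ℕ, Continuous ⇑(α ^ n) := by
    intro n
    induction n with
    | zero =>
        exact continuous_id.congr fun x => by rw [pow_zero]; rfl
    | succ n ih =>
        have h1 : ⇑(α ^ (n + 1)) = ⇑(α ^ n) ∘ ⇑α := funext fun x => by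
          rw [pow_succ, MulAut.mul_apply]; rfl
        rw [h1]
        exact ih.comp hα
  have hbW : ∀ n : ℕ, (α ^ n) b ∈ W := mem_minusSet_iff.1 hb
  have horb : ∀ n : ℕ, (α ^ n) a = (α ^ n) (a * b) * ((α ^ n) b)⁻¹ := by
    intro n
    rw [map_mul, mul_inv_cancel_right]
  -- the orbit of a is bounded
  have hDc : IsCompact ((closure (Set.range fun n : ℕ => (α ^ n) (a * b))) * (W : Set G)) :=
    hbd.mul hWc
  have hranD : (Set.range fun n : ℕ => (α ^ n) a)
      ⊆ (closure (Set.range fun n : ℕ => (α ^ n) (a * b))) * (W : Set G) := by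
    rintro _ ⟨n, rfl⟩
    show (α ^ n) a ∈ _
    rw [horb n]
    exact Set.mul_mem_mul (subset_closure ⟨n, rfl⟩) (W.inv_mem (hbW n))
  set C : Set G := closure (Set.range fun n : ℕ => (α ^ n) a) with hC
  have hCsub : C ⊆ _ := closure_minimal hranD hDc.isClosed
  have hCc : IsCompact C := hDc.of_isClosed_subset isClosed_closure hCsub
  -- C sits inside the closed set plusplusSet
  have hranPP : (Set.range fun n : ℕ => (α ^ n) a) ⊆ plusplusSet α (W : Set G) := by
    rintro _ ⟨n, rfl⟩
    exact Set.mem_iUnion.2 ⟨n, ⟨a, ha, rfl⟩⟩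
  have hCPP : C ⊆ plusplusSet α (W : Set G) := closure_minimal hranPP hT2
  -- compactness of the layers
  have hPcl : IsClosed (plusSet α (W : Set G)) :=
    isClosed_iInter fun n => (hWc.image (hcont n)).isClosed
  have hPc : IsCompact (plusSet α (W : Set G)) :=
    hWc.of_isClosed_subset hPcl plusSet_subset_self
  have hLc : ∀ n : ℕ, IsCompact (⇑(α ^ n) '' plusSet α (W : Set G)) :=
    fun n => hPc.image (hcont n)
  -- Baire category on plusplusSet
  haveI : LocallyCompactSpace (plusplusSet α (W : Set G)) := hT2.locallyCompactSpace
  have h1P : (1 : G) ∈ plusSet α (W : Set G) := by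
    rw [mem_plusSet_iff]
    intro n
    rw [map_one]
    exact W.one_mem
  have h1PP : (1 : G) ∈ plusplusSet α (W : Set G) :=
    Set.mem_iUnion.2 ⟨0, ⟨1, h1P, map_one _⟩⟩
  haveI : Nonempty (plusplusSet α (W : Set G)) := ⟨⟨1, h1PP⟩⟩
  have hcover : (⋃ n : ℕ, (Subtype.val ⁻¹' (⇑(α ^ n) '' plusSet α (W : Set G)) :
      Set (plusplusSet α (W : Set G)))) = Set.univ := by
    ext x
    simp only [Set.mem_iUnion, Set.mem_preimage, Set.mem_univ, iff_true]
    exact Set.mem_iUnion.1 x.2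
  obtain ⟨N, hN⟩ := nonempty_interior_of_iUnion_of_closed
    (fun n => (hLc n).isClosed.preimage continuous_subtype_val) hcover
  obtain ⟨x0, hx0⟩ := hN
  rw [mem_interior_iff_mem_nhds, nhds_subtype_eq_comap, Filter.mem_comap] at hx0
  obtain ⟨t, ht, htsub⟩ := hx0
  obtain ⟨U, hUt, hUo, hx0U⟩ := mem_nhds_iff.1 ht
  have hh0PP : (x0 : G) ∈ plusplusSet α (W : Set G) := x0.2
  have hUP : ∀ y : G, y ∈ U → y ∈ plusplusSet α (W : Set G) →
      y ∈ ⇑(α ^ N) '' plusSet α (W : Set G) := by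
    intro y hyU hyPP
    exact htsub (show (⟨y, hyPP⟩ : plusplusSet α (W : Set G)) ∈ Subtype.val ⁻¹' t from
      hUt hyU)
  -- plusplusSet is closed under the group operations
  have hPPmul : ∀ x y : G, x ∈ plusplusSet α (W : Set G) → y ∈ plusplusSet α (W : Set G) →
      x * y ∈ plusplusSet α (W : Set G) := by
    intro x y hx hy
    obtain ⟨j, hj⟩ := Set.mem_iUnion.1 hx
    obtain ⟨k, hk⟩ := Set.mem_iUnion.1 hy
    exact Set.mem_iUnion.2 ⟨max j k, mem_layer_mul hj hk⟩
  have hPPinv : ∀ x : G, x ∈ plusplusSet α (W : Set G) →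
      x⁻¹ ∈ plusplusSet α (W : Set G) := by
    intro x hx
    obtain ⟨j, hj⟩ := Set.mem_iUnion.1 hx
    exact Set.mem_iUnion.2 ⟨j, mem_layer_inv hj⟩
  -- open cover of C by translates of U
  set Vc : C → Set G := fun c => (fun y => (c : G) * (x0 : G)⁻¹ * y) '' U with hVc
  have hVo : ∀ c : C, IsOpen (Vc c) := fun c => (isOpenMap_mul_left _) U hUo
  have hmemV : ∀ c : C, (c : G) ∈ Vc c := fun c =>
    ⟨(x0 : G), hx0U, inv_mul_cancel_right _ _⟩
  have hCcover : C ⊆ ⋃ c : C, Vc c := fun x hx =>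
    Set.mem_iUnion.2 ⟨⟨x, hx⟩, hmemV ⟨x, hx⟩⟩
  obtain ⟨s, hs⟩ := hCc.elim_finite_subcover Vc hVo hCcover
  have hlev : ∀ c : C, ∃ m : ℕ, (c : G) ∈ ⇑(α ^ m) '' plusSet α (W : Set G) :=
    fun c => Set.mem_iUnion.1 (hCPP c.2)
  choose lev hlevspec using hlev
  obtain ⟨k₀, hk₀⟩ := Set.mem_iUnion.1 hh0PP
  set M : ℕ := s.sup (fun c => max (max (lev c) k₀) N) with hM
  have hCM : C ⊆ ⇑(α ^ M) '' plusSet α (W : Set G) := by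
    intro x hx
    obtain ⟨c, hcs, hxV⟩ := Set.mem_iUnion₂.1 (hs hx)
    obtain ⟨u, huU, hxu⟩ := hxV
    have hxu' : (c : G) * (x0 : G)⁻¹ * u = x := hxu
    have hxPP : x ∈ plusplusSet α (W : Set G) := hCPP hx
    have hcPP : (c : G) ∈ plusplusSet α (W : Set G) := hCPP c.2
    have huPP : u ∈ plusplusSet α (W : Set G) := by
      have hu' : u = ((c : G) * (x0 : G)⁻¹)⁻¹ * x := eq_inv_mul_iff_mul_eq.2 hxu'
      rw [hu']
      exact hPPmul _ _ (hPPinv _ (hPPmul _ _ hcPP (hPPinv _ hh0PP))) hxPP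
    have huN : u ∈ ⇑(α ^ N) '' plusSet α (W : Set G) := hUP u huU huPP
    have h1 : (c : G) * (x0 : G)⁻¹ ∈ ⇑(α ^ max (lev c) k₀) '' plusSet α (W : Set G) :=
      mem_layer_mul (hlevspec c) (mem_layer_inv hk₀)
    have h2 : (c : G) * (x0 : G)⁻¹ * u
        ∈ ⇑(α ^ max (max (lev c) k₀) N) '' plusSet α (W : Set G) :=
      mem_layer_mul h1 huN
    rw [← hxu']
    exact image_pow_plusSet_mono α (W : Set G) (Finset.le_sup hcs) h2
  -- extract the orbit of a
  have haW : ∀ n : ℕ, (α ^ n) a ∈ plusSet α (W : Set G) := by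
    intro n
    have hmem : (α ^ (M + n)) a ∈ ⇑(α ^ M) '' plusSet α (W : Set G) :=
      hCM (subset_closure ⟨M + n, rfl⟩)
    obtain ⟨y, hy, hyy⟩ := hmem
    have hpow : (α ^ (M + n)) a = (α ^ M) ((α ^ n) a) := by
      rw [pow_add, MulAut.mul_apply]
    have heq : (α ^ M) ((α ^ n) a) = (α ^ M) y := by rw [← hpow, ← hyy]
    have hy' : (α ^ n) a = y := (α ^ M).injective heq
    rw [hy']
    exact hy
  have hfin : ∀ n : ℕ, (α ^ n) (a * b) ∈ W := by
    intro n
    rw [map_mul]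
    exact W.mul_mem (plusSet_subset_self (haW n)) (hbW n)
  exact ⟨mem_minusSet_iff.2 hfin, hfin⟩
end

section
/- Let α and β be commuting automorphisms of G and let K be the closure of the set {g ∈ G : βʲ(g) → e as j → ∞ and {β⁻ʲ(g) : j ≥ 0} is bounded}. Then K is a compact subgroup of G and α(K) = K. -/
open scoped Pointwise

universe u

variable {G : Type u} [Group G] [TopologicalSpace G] [IsTopologicalGroup G]

section NubAux

open Filter

/-- The set of elements forward-contracted to `1` by `β` with bounded backward orbit. -/
def contraSet (β : MulAut G) : Set G :=
  {g : G | Filter.Tendsto (fun j : ℕ => (β ^ j) g) Filter.atTop (nhds 1) ∧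
      IsCompact (closure (Set.range fun j : ℕ => (β⁻¹ ^ j) g))}

variable [T2Space G]

lemma one_mem_contraSet (β : MulAut G) : (1 : G) ∈ contraSet β := by
  constructor
  · simpa using (tendsto_const_nhds : Filter.Tendsto (fun _ : ℕ => (1 : G)) Filter.atTop _)
  · have : (Set.range fun j : ℕ => (β⁻¹ ^ j) (1 : G)) = {1} := by simp
    rw [this, closure_singleton]
    exact isCompact_singleton

lemma mul_mem_contraSet (β : MulAut G) {g h : G} (hg : g ∈ contraSet β)
    (hh : h ∈ contraSet β) : g * h ∈ contraSet β := by
  obtain ⟨hg1, hg2⟩ := hg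
  obtain ⟨hh1, hh2⟩ := hh
  constructor
  · have := hg1.mul hh1
    simpa using this
  · have hsub : (Set.range fun j : ℕ => (β⁻¹ ^ j) (g * h)) ⊆
        closure (Set.range fun j : ℕ => (β⁻¹ ^ j) g) *
        closure (Set.range fun j : ℕ => (β⁻¹ ^ j) h) := by
      rintro x ⟨j, rfl⟩
      show (β⁻¹ ^ j) (g * h) ∈ _
      rw [map_mul]
      have h1 : (β⁻¹ ^ j) g ∈ closure (Set.range fun j : ℕ => (β⁻¹ ^ j) g) :=
        subset_closure (Set.mem_range_self j)
      have h2 : (β⁻¹ ^ j) h ∈ closure (Set.range fun j : ℕ => (β⁻¹ ^ j) h) :=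
        subset_closure (Set.mem_range_self j)
      exact Set.mul_mem_mul h1 h2
    have hcomp := hg2.mul hh2
    exact IsCompact.of_isClosed_subset hcomp isClosed_closure
      (closure_minimal hsub hcomp.isClosed)

lemma inv_mem_contraSet (β : MulAut G) {g : G} (hg : g ∈ contraSet β) :
    g⁻¹ ∈ contraSet β := by
  obtain ⟨hg1, hg2⟩ := hg
  constructor
  · have := hg1.inv
    simpa using this
  · have hr : (Set.range fun j : ℕ => (β⁻¹ ^ j) g⁻¹) =
        (Set.range fun j : ℕ => (β⁻¹ ^ j) g)⁻¹ := by
      ext x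
      rw [Set.mem_inv]
      constructor
      · rintro ⟨j, rfl⟩
        refine ⟨j, ?_⟩
        show (β⁻¹ ^ j) g = ((β⁻¹ ^ j) g⁻¹)⁻¹
        rw [map_inv, inv_inv]
      · rintro ⟨j, hj⟩
        simp only [] at hj
        refine ⟨j, ?_⟩
        show (β⁻¹ ^ j) g⁻¹ = x
        rw [map_inv, hj, inv_inv]
    rw [hr, ← inv_closure]
    exact hg2.inv

/-- `contraSet β` as a subgroup. -/
def contraSub (β : MulAut G) : Subgroup G where
  carrier := contraSet β
  one_mem' := one_mem_contraSet β
  mul_mem' := fun ha hb => mul_mem_contraSet β ha hb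
  inv_mem' := fun ha => inv_mem_contraSet β ha

lemma maps_contraSet {α β : MulAut G} (hα : Continuous ⇑α) (hcomm : Commute α β) :
    ∀ g ∈ contraSet β, α g ∈ contraSet β := by
  intro g hg
  obtain ⟨hg1, hg2⟩ := hg
  have key : ∀ j : ℕ, (β ^ j) (α g) = α ((β ^ j) g) := by
    intro j
    have h := (hcomm.pow_right j).symm
    calc (β ^ j) (α g) = ((β ^ j) * α) g := rfl
      _ = (α * (β ^ j)) g := by rw [h]
      _ = α ((β ^ j) g) := rfl
  have key' : ∀ j : ℕ, (β⁻¹ ^ j) (α g) = α ((β⁻¹ ^ j) g) := by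
    intro j
    have h := (hcomm.inv_right.pow_right j).symm
    calc (β⁻¹ ^ j) (α g) = ((β⁻¹ ^ j) * α) g := rfl
      _ = (α * (β⁻¹ ^ j)) g := by rw [h]
      _ = α ((β⁻¹ ^ j) g) := rfl
  constructor
  · have hcont : Filter.Tendsto (⇑α) (nhds 1) (nhds 1) := by
      have := hα.tendsto (1 : G)
      rwa [map_one] at this
    have := hcont.comp hg1
    simpa [Function.comp_def, key] using this
  · have hr : (Set.range fun j : ℕ => (β⁻¹ ^ j) (α g)) ⊆
        ⇑α '' closure (Set.range fun j : ℕ => (β⁻¹ ^ j) g) := by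
      rintro x ⟨j, rfl⟩
      exact ⟨(β⁻¹ ^ j) g, subset_closure (Set.mem_range_self j), (key' j).symm⟩
    have himg : IsCompact (⇑α '' closure (Set.range fun j : ℕ => (β⁻¹ ^ j) g)) :=
      hg2.image hα
    exact IsCompact.of_isClosed_subset himg isClosed_closure
      (closure_minimal hr himg.isClosed)

lemma image_contraSet {α β : MulAut G} (hα : Continuous ⇑α) (hα' : Continuous ⇑(α⁻¹))
    (hcomm : Commute α β) : ⇑α '' contraSet β = contraSet β := by
  apply Set.Subset.antisymm
  · rintro x ⟨g, hg, rfl⟩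
    exact maps_contraSet hα hcomm g hg
  · intro g hg
    refine ⟨α⁻¹ g, maps_contraSet hα' hcomm.inv_left g hg, ?_⟩
    simp

/-- The homeomorphism underlying a bicontinuous automorphism. -/
def mulAutHomeo (α : MulAut G) (hα : Continuous ⇑α) (hα' : Continuous ⇑(α⁻¹)) : G ≃ₜ G where
  toEquiv := α.toEquiv
  continuous_toFun := hα
  continuous_invFun := hα'

/-- **van Dantzig's theorem**: a totally disconnected locally compact Hausdorff group
has a compact open subgroup. -/
lemma exists_compact_open_subgroup [LocallyCompactSpace G] [TotallyDisconnectedSpace G]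
    [T2Space G] : ∃ U : Subgroup G, IsCompact (U : Set G) ∧ IsOpen (U : Set G) := by
  obtain ⟨K, hKc, hK1⟩ := exists_compact_mem_nhds (1 : G)
  obtain ⟨V, hVclopen, hV1, hVK⟩ :=
    (loc_compact_Haus_tot_disc_of_zero_dim (H := G)).mem_nhds_iff.mp hK1
  have hVcpt : IsCompact V := hKc.of_isClosed_subset hVclopen.1 hVK
  obtain ⟨W, hW1, hWV⟩ := compact_open_separated_mul_left hVcpt hVclopen.2 subset_rfl
  set W' : Set G := W ∩ W⁻¹ with hW'def
  have hW'1 : W' ∈ nhds (1 : G) := by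
    refine Filter.inter_mem hW1 ?_
    have : (fun g : G => g⁻¹) ⁻¹' W ∈ nhds (1 : G) := by
      have h := continuous_inv.tendsto (1 : G)
      rw [inv_one] at h
      exact h hW1
    simpa [Set.inv_preimage] using this
  have hW'symm : W'⁻¹ = W' := by
    rw [hW'def]
    ext x
    simp only [Set.mem_inter_iff, Set.mem_inv, inv_inv]
    tauto
  have hW'sub : W' ⊆ W := Set.inter_subset_left
  refine ⟨Subgroup.closure W', ?_, ?_⟩
  · -- compact: closure W' ⊆ V
    have hsub : (Subgroup.closure W' : Set G) ⊆ V := by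
      intro x hx
      have hx' : x ∈ Submonoid.closure (W' ∪ W'⁻¹) := by
        rw [← Subgroup.closure_toSubmonoid W']
        exact hx
      rw [hW'symm, Set.union_self] at hx'
      obtain ⟨l, hl, rfl⟩ := Submonoid.exists_list_of_mem_closure hx'
      clear hx hx'
      induction l with
      | nil => simpa using hV1
      | cons y t ih =>
        have hy : y ∈ W' := hl y List.mem_cons_self
        have ht : t.prod ∈ V := ih (fun z hz => hl z (List.mem_cons_of_mem y hz))
        rw [List.prod_cons]
        exact hWV (Set.mul_mem_mul (hW'sub hy) ht)
    have hopen : IsOpen ((Subgroup.closure W' : Subgroup G) : Set G) :=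
      Subgroup.isOpen_of_mem_nhds _ (Filter.mem_of_superset hW'1 Subgroup.subset_closure)
    have hclosed : IsClosed ((Subgroup.closure W' : Subgroup G) : Set G) :=
      Subgroup.isClosed_of_isOpen _ hopen
    exact hVcpt.of_isClosed_subset hclosed hsub
  · exact Subgroup.isOpen_of_mem_nhds _ (Filter.mem_of_superset hW'1 Subgroup.subset_closure)

lemma contPow {β : MulAut G} (hβ : Continuous ⇑β) : ∀ k : ℕ, Continuous ⇑(β ^ k) := by
  intro k
  induction k with
  | zero => simpa using continuous_id
  | succ n ih =>
    have : ⇑(β ^ (n + 1)) = ⇑(β ^ n) ∘ ⇑β := by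
      ext x
      rw [pow_succ]
      rfl
    rw [this]
    exact ih.comp hβ

section Main

variable [T2Space G] (β : MulAut G) (U : Subgroup G)

/-- `⋂_{k ≥ 0} β^{-k}(U)`. -/
def vminus : Set G := ⋂ k : ℕ, ⇑(β⁻¹ ^ k) '' (U : Set G)

lemma mem_vminus_iff (x : G) : x ∈ vminus β U ↔ ∀ k : ℕ, (β ^ k) x ∈ U := by
  simp only [vminus, Set.mem_iInter]
  refine forall_congr' fun k => ?_
  constructor
  · rintro ⟨u, hu, rfl⟩
    have : (β ^ k) ((β⁻¹ ^ k) u) = u := by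
      rw [inv_pow]
      exact (β ^ k).apply_symm_apply u
    rwa [this]
  · intro h
    refine ⟨(β ^ k) x, h, ?_⟩
    rw [inv_pow]
    exact (β ^ k).symm_apply_apply x

variable {β U}

lemma vminus_subset (hUc : IsCompact (U : Set G)) : vminus β U ⊆ (U : Set G) := by
  intro x hx
  have := (mem_vminus_iff β U x).mp hx 0
  simpa using this

lemma vminus_isCompact (hβ' : Continuous ⇑(β⁻¹)) (hUc : IsCompact (U : Set G)) :
    IsCompact (vminus β U) := by
  have hclosed : IsClosed (vminus β U) := by
    refine isClosed_iInter fun k => ?_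
    exact (hUc.image (contPow hβ' k)).isClosed
  exact hUc.of_isClosed_subset hclosed (vminus_subset hUc)

lemma one_mem_vminus : (1 : G) ∈ vminus β U := by
  rw [mem_vminus_iff]
  intro k
  rw [map_one]
  exact U.one_mem

lemma mul_mem_vminus {x y : G} (hx : x ∈ vminus β U) (hy : y ∈ vminus β U) :
    x * y ∈ vminus β U := by
  rw [mem_vminus_iff] at hx hy ⊢
  intro k
  rw [map_mul]
  exact U.mul_mem (hx k) (hy k)

lemma inv_mem_vminus {x : G} (hx : x ∈ vminus β U) : x⁻¹ ∈ vminus β U := by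
  rw [mem_vminus_iff] at hx ⊢
  intro k
  rw [map_inv]
  exact U.inv_mem (hx k)

lemma vminus_mul_self : vminus β U * vminus β U = vminus β U := by
  apply Set.Subset.antisymm
  · rintro x ⟨a, ha, b, hb, rfl⟩
    exact mul_mem_vminus ha hb
  · intro x hx
    exact ⟨x, hx, 1, one_mem_vminus, mul_one x⟩

lemma pow_image_vminus (t : ℕ) : ⇑(β ^ t) '' vminus β U ⊆ vminus β U := by
  rintro x ⟨v, hv, rfl⟩
  rw [mem_vminus_iff] at hv ⊢
  intro k
  have : (β ^ k) ((β ^ t) v) = (β ^ (k + t)) v := by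
    rw [pow_add]
    rfl
  rw [this]
  exact hv (k + t)

end Main

section Main2

variable [T2Space G]

/-- levels `β^{-m}(V₋)`. -/
def wlevel (β : MulAut G) (U : Subgroup G) (m : ℕ) : Set G := ⇑(β⁻¹ ^ m) '' vminus β U

variable {β : MulAut G} {U : Subgroup G}

lemma wlevel_mono : ∀ {m m' : ℕ}, m ≤ m' → wlevel β U m ⊆ wlevel β U m' := by
  have step : ∀ m : ℕ, wlevel β U m ⊆ wlevel β U (m + 1) := by
    intro m x hx
    obtain ⟨v, hv, rfl⟩ := hx
    have hβv : β v ∈ vminus β U := pow_image_vminus 1 ⟨v, hv, by simp [pow_one]⟩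
    refine ⟨β v, hβv, ?_⟩
    have : (β⁻¹ ^ (m + 1)) (β v) = (β⁻¹ ^ m) ((β⁻¹) (β v)) := by
      rw [pow_succ]
      rfl
    rw [this]
    congr 1
    exact β.symm_apply_apply v
  intro m m' h
  induction h with
  | refl => exact fun x hx => hx
  | step h ih => exact fun x hx => step _ (ih hx)

/-- `⋃_m β^{-m}(V₋)` as a subgroup. -/
def vll (β : MulAut G) (U : Subgroup G) : Subgroup G where
  carrier := ⋃ m : ℕ, wlevel β U m
  one_mem' := Set.mem_iUnion.mpr ⟨0, 1, one_mem_vminus, map_one _⟩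
  mul_mem' := by
    rintro a b ha hb
    obtain ⟨m, hma⟩ := Set.mem_iUnion.mp ha
    obtain ⟨m', hmb⟩ := Set.mem_iUnion.mp hb
    refine Set.mem_iUnion.mpr ⟨max m m', ?_⟩
    obtain ⟨v, hv, rfl⟩ := wlevel_mono (le_max_left m m') hma
    obtain ⟨v', hv', rfl⟩ := wlevel_mono (le_max_right m m') hmb
    exact ⟨v * v', mul_mem_vminus hv hv', map_mul _ _ _⟩
  inv_mem' := by
    rintro a ha
    obtain ⟨m, v, hv, rfl⟩ := Set.mem_iUnion.mp ha
    exact Set.mem_iUnion.mpr ⟨m, v⁻¹, inv_mem_vminus hv, map_inv _ _⟩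

lemma wlevel_subset_vll (m : ℕ) : wlevel β U m ⊆ (vll β U : Set G) :=
  fun x hx => Set.mem_iUnion.mpr ⟨m, hx⟩

lemma image_beta_vll (β : MulAut G) (U : Subgroup G) :
    ⇑β '' (vll β U : Set G) = (vll β U : Set G) := by
  apply Set.Subset.antisymm
  · rintro x ⟨a, ha, rfl⟩
    obtain ⟨m, v, hv, rfl⟩ := Set.mem_iUnion.mp ha
    rcases m with - | m
    · -- a ∈ vminus
      simp only [pow_zero] at hv ⊢
      have : β ((1 : MulAut G)⁻¹ v) = (β ^ 1) v := by simp
      apply wlevel_subset_vll 0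
      refine ⟨β v, pow_image_vminus 1 ⟨v, hv, by simp [pow_one]⟩, ?_⟩
      simp
    · apply wlevel_subset_vll m
      refine ⟨v, hv, ?_⟩
      have : (β⁻¹ ^ (m + 1)) v = (β⁻¹) ((β⁻¹ ^ m) v) := by
        rw [pow_succ']
        rfl
      rw [this, MulAut.inv_def]
      exact (β.apply_symm_apply _).symm
  · intro x hx
    obtain ⟨m, v, hv, rfl⟩ := Set.mem_iUnion.mp hx
    refine ⟨(β⁻¹ ^ (m + 1)) v, wlevel_subset_vll (m + 1) ⟨v, hv, rfl⟩, ?_⟩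
    have : (β⁻¹ ^ (m + 1)) v = (β⁻¹) ((β⁻¹ ^ m) v) := by
      rw [pow_succ']
      rfl
    rw [this, MulAut.inv_def]
    exact β.apply_symm_apply _

lemma image_mul_subset (f : MulAut G) (A B : Set G) :
    ⇑f '' (A * B) ⊆ (⇑f '' A) * (⇑f '' B) := by
  rintro x ⟨y, ⟨a, ha, b, hb, rfl⟩, rfl⟩
  exact ⟨f a, ⟨a, ha, rfl⟩, f b, ⟨b, hb, rfl⟩, (map_mul f a b).symm⟩

lemma image_image_aut (f g : MulAut G) (A : Set G) :
    ⇑f '' (⇑g '' A) = ⇑(f * g) '' A := by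
  rw [Set.image_image]
  rfl

lemma contra_bounded {β : MulAut G} {U : Subgroup G}
    (hβ : Continuous ⇑β) (hβ' : Continuous ⇑(β⁻¹))
    (hUc : IsCompact (U : Set G)) (hUo : IsOpen (U : Set G)) :
    ∃ F : Set G, IsCompact F ∧ ∀ z : G,
      Filter.Tendsto (fun j : ℕ => (β ^ j) z) Filter.atTop (nhds 1) →
      IsCompact (closure (Set.range fun j : ℕ => (β⁻¹ ^ j) z)) → z ∈ F := by
  classical
  set X : Subgroup G := (vll β U).topologicalClosure with hXdef
  have hXset : (X : Set G) = closure (vll β U : Set G) := rfl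
  have hXclosed : IsClosed (X : Set G) := by
    rw [hXset]; exact isClosed_closure
  have hvllX : (vll β U : Set G) ⊆ (X : Set G) := by
    rw [hXset]; exact subset_closure
  -- β leaves X invariant
  have hXbeta : ⇑β '' (X : Set G) = (X : Set G) := by
    rw [hXset]
    have := (mulAutHomeo β hβ hβ').image_closure (vll β U : Set G)
    have hcoe : ⇑(mulAutHomeo β hβ hβ') = ⇑β := rfl
    rw [hcoe] at this
    rw [this, image_beta_vll]
  -- the open sets O m
  set O : ℕ → Set G := fun m => wlevel β U m * (U : Set G) with hOdef
  have hOopen : ∀ m, IsOpen (O m) := fun m => IsOpen.mul_left hUo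
  have hOmono : ∀ {m m'}, m ≤ m' → O m ⊆ O m' := fun {m m'} h =>
    Set.mul_subset_mul (wlevel_mono h) Set.Subset.rfl
  -- X is covered by the O m
  have hXcover : (X : Set G) ⊆ ⋃ m, O m := by
    intro x hx
    rw [hXset] at hx
    have hmem : x ∈ x • (U : Set G) := ⟨1, U.one_mem, by simp⟩
    obtain ⟨v, hv1, hv2⟩ := (mem_closure_iff.mp hx) (x • (U : Set G)) (hUo.smul x) hmem
    obtain ⟨u, hu, rfl⟩ := hv1
    obtain ⟨m, hm⟩ := Set.mem_iUnion.mp hv2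
    refine Set.mem_iUnion.mpr ⟨m, x • u, hm, u⁻¹, U.inv_mem hu, ?_⟩
    simp [smul_eq_mul]
  -- compact subsets of X lie in some O m
  have hcpt_cover : ∀ C : Set G, IsCompact C → C ⊆ (X : Set G) → ∃ m, C ⊆ O m := by
    intro C hC hCX
    obtain ⟨t, ht⟩ := hC.elim_finite_subcover O hOopen (hCX.trans hXcover)
    refine ⟨t.sup id, ht.trans ?_⟩
    refine Set.iUnion₂_subset fun i hi => hOmono ?_
    exact Finset.le_sup (f := id) hi
  -- U' and m₁
  set U' : Set G := (U : Set G) ∩ (X : Set G) with hU'def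
  have hU'c : IsCompact U' := hUc.inter_right hXclosed
  have hU'X : U' ⊆ (X : Set G) := Set.inter_subset_right
  have hOX : ∀ m, O m ∩ (X : Set G) = wlevel β U m * U' := by
    intro m
    apply Set.Subset.antisymm
    · rintro x ⟨⟨w, hw, u, hu, rfl⟩, hxX⟩
      have hwX : w ∈ (X : Set G) := hvllX (wlevel_subset_vll m hw)
      have huX : u ∈ (X : Set G) := by
        have : w⁻¹ * (w * u) ∈ X := X.mul_mem (X.inv_mem hwX) hxX
        simpa using this
      exact ⟨w, hw, u, ⟨hu, huX⟩, rfl⟩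
    · rintro x ⟨w, hw, u, ⟨huU, huX⟩, rfl⟩
      refine ⟨⟨w, hw, u, huU, rfl⟩, ?_⟩
      exact X.mul_mem (hvllX (wlevel_subset_vll m hw)) huX
  have hβU'X : ⇑β '' U' ⊆ (X : Set G) := by
    rw [← hXbeta]
    exact Set.image_mono hU'X
  obtain ⟨m₁, hm₁⟩ := hcpt_cover (⇑β '' U') (hU'c.image hβ) hβU'X
  have hm₁' : ⇑β '' U' ⊆ wlevel β U m₁ * U' := by
    rw [← hOX]
    exact Set.subset_inter hm₁ hβU'X
  -- powers of β applied to wlevel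
  have hpow_wlevel : ∀ {a b : ℕ}, b ≤ a → ⇑(β ^ a) '' wlevel β U b ⊆ vminus β U := by
    intro a b hba
    rw [wlevel, image_image_aut]
    have : β ^ a * β⁻¹ ^ b = β ^ (a - b) := by
      rw [inv_pow]
      have : β ^ a = β ^ (a - b) * β ^ b := by
        rw [← pow_add, Nat.sub_add_cancel hba]
      rw [this, mul_assoc, mul_inv_cancel, mul_one]
    rw [this]
    exact pow_image_vminus (a - b)
  -- stabilization: descending chain
  have hstep : ∀ m, m₁ ≤ m →
      vminus β U * (⇑(β ^ (m + 1)) '' U') ⊆ vminus β U * (⇑(β ^ m) '' U') := by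
    intro m hm
    have h1 : ⇑(β ^ (m + 1)) '' U' = ⇑(β ^ m) '' (⇑β '' U') := by
      rw [image_image_aut, ← pow_succ]
    have h2 : ⇑(β ^ (m + 1)) '' U' ⊆ vminus β U * (⇑(β ^ m) '' U') := by
      rw [h1]
      refine (Set.image_mono hm₁').trans ?_
      refine (image_mul_subset _ _ _).trans ?_
      exact Set.mul_subset_mul (hpow_wlevel hm) Set.Subset.rfl
    calc vminus β U * (⇑(β ^ (m + 1)) '' U')
        ⊆ vminus β U * (vminus β U * (⇑(β ^ m) '' U')) :=
          Set.mul_subset_mul Set.Subset.rfl h2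
      _ = (vminus β U * vminus β U) * (⇑(β ^ m) '' U') := (mul_assoc _ _ _).symm
      _ = vminus β U * (⇑(β ^ m) '' U') := by rw [vminus_mul_self]
  have hdesc : ∀ s, m₁ ≤ s →
      vminus β U * (⇑(β ^ s) '' U') ⊆ vminus β U * (⇑(β ^ m₁) '' U') := by
    intro s hs
    induction s, hs using Nat.le_induction with
    | base => exact Set.Subset.rfl
    | succ n hn ih => exact (hstep n hn).trans ih
  -- the fixed compact set
  refine ⟨vminus β U * (⇑(β ^ m₁) '' U'), (vminus_isCompact hβ' hUc).mul
    (hU'c.image (contPow hβ m₁)), ?_⟩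
  intro z hz1 hz2
  -- forward tail enters U
  have hU_nhds : (U : Set G) ∈ nhds (1 : G) := hUo.mem_nhds U.one_mem
  obtain ⟨N, hN⟩ := Filter.eventually_atTop.mp (hz1 hU_nhds)
  have hVmN : ∀ s : ℕ, N ≤ s → (β ^ s) z ∈ vminus β U := by
    intro s hs
    rw [mem_vminus_iff]
    intro k
    have h2 : (β ^ k) ((β ^ s) z) = (β ^ (k + s)) z := by
      rw [pow_add]
      rfl
    rw [h2]
    exact hN (k + s) (hs.trans (Nat.le_add_left s k))
  -- the ℤ-orbit of z
  set Orb : Set G := Set.range (fun t : ℤ => (β ^ t) z) with hOrbdef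
  have hzpow_nat : ∀ n : ℕ, (β ^ (n : ℤ)) = β ^ n := fun n => zpow_natCast β n
  have hOrbVLL : Orb ⊆ (vll β U : Set G) := by
    rintro x ⟨t, rfl⟩
    set m : ℕ := (↑N - t).toNat with hm
    set s : ℕ := (t + m).toNat with hs
    have hs' : (s : ℤ) = t + m := Int.toNat_of_nonneg (by omega)
    have hsN : N ≤ s := by omega
    apply wlevel_subset_vll m
    refine ⟨(β ^ s) z, hVmN s hsN, ?_⟩
    have hid : (β⁻¹ ^ m : MulAut G) * β ^ (s : ℤ) = β ^ t := by
      have h1 : (β⁻¹ ^ m : MulAut G) = β ^ (-(m : ℤ)) := by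
        rw [inv_pow, ← zpow_natCast, ← zpow_neg]
      rw [h1, ← zpow_add]
      congr 1
      omega
    have h3 : (β ^ s) z = (β ^ (s : ℤ)) z := by rw [hzpow_nat]
    rw [h3]
    show ((β⁻¹ ^ m : MulAut G) * β ^ (s : ℤ)) z = (β ^ t) z
    rw [hid]
  -- the orbit has compact closure
  have hBc : IsCompact ((closure (Set.range fun j : ℕ => (β⁻¹ ^ j) z)) ∪
      insert 1 (Set.range fun j : ℕ => (β ^ j) z)) :=
    hz2.union hz1.isCompact_insert_range
  have hOrbB : Orb ⊆ (closure (Set.range fun j : ℕ => (β⁻¹ ^ j) z)) ∪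
      insert 1 (Set.range fun j : ℕ => (β ^ j) z) := by
    rintro x ⟨t, rfl⟩
    rcases le_or_gt 0 t with h | h
    · refine Or.inr (Set.mem_insert_iff.mpr (Or.inr ⟨t.toNat, ?_⟩))
      show (β ^ t.toNat) z = (β ^ t) z
      rw [← hzpow_nat, Int.toNat_of_nonneg h]
    · refine Or.inl (subset_closure ⟨(-t).toNat, ?_⟩)
      show (β⁻¹ ^ (-t).toNat) z = (β ^ t) z
      have h4 : (β⁻¹ ^ ((-t).toNat) : MulAut G) = β ^ t := by
        rw [inv_pow, ← zpow_natCast, ← zpow_neg]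
        congr 1
        omega
      rw [h4]
  have hC : IsCompact (closure Orb) :=
    hBc.of_isClosed_subset isClosed_closure (closure_minimal hOrbB hBc.isClosed)
  have hCX : closure Orb ⊆ (X : Set G) :=
    closure_minimal (hOrbVLL.trans hvllX) hXclosed
  -- β leaves the orbit closure invariant
  have hOrbBeta : ⇑β '' Orb = Orb := by
    apply Set.Subset.antisymm
    · rintro x ⟨y, ⟨t, rfl⟩, rfl⟩
      refine ⟨1 + t, ?_⟩
      have h5 : (β ^ (1 + t) : MulAut G) = β * β ^ t := by
        rw [zpow_add, zpow_one]
      show (β ^ (1 + t)) z = β ((β ^ t) z)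
      rw [h5]
      rfl
    · rintro x ⟨t, rfl⟩
      refine ⟨(β ^ (t - 1)) z, ⟨t - 1, rfl⟩, ?_⟩
      have h6 : (β ^ t : MulAut G) = β * β ^ (t - 1) := by
        have h7 := zpow_add β 1 (t - 1)
        rw [zpow_one] at h7
        have h8 : (1 : ℤ) + (t - 1) = t := by omega
        rw [h8] at h7
        exact h7
      show β ((β ^ (t - 1)) z) = (β ^ t) z
      rw [h6]
      rfl
  have hCbeta : ⇑β '' closure Orb = closure Orb := by
    have h7 := (mulAutHomeo β hβ hβ').image_closure Orb
    have hcoe : ⇑(mulAutHomeo β hβ hβ') = ⇑β := rfl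
    rw [hcoe] at h7
    rw [h7, hOrbBeta]
  have hCpow : ∀ s : ℕ, ⇑(β ^ s) '' closure Orb = closure Orb := by
    intro s
    induction s with
    | zero => simp
    | succ n ih =>
      have h8 : ⇑(β ^ (n + 1)) '' closure Orb = ⇑(β ^ n) '' (⇑β '' closure Orb) := by
        rw [image_image_aut, ← pow_succ]
      rw [h8, hCbeta, ih]
  -- conclude
  obtain ⟨m₂', hm₂'⟩ := hcpt_cover (closure Orb) hC hCX
  set m₂ : ℕ := max m₂' m₁ with hm₂def
  have hCO : closure Orb ⊆ wlevel β U m₂ * U' := by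
    rw [← hOX]
    exact Set.subset_inter (hm₂'.trans (hOmono (le_max_left _ _))) hCX
  have h9 : ⇑(β ^ m₂) '' closure Orb ⊆ vminus β U * (⇑(β ^ m₁) '' U') :=
    calc ⇑(β ^ m₂) '' closure Orb
        ⊆ ⇑(β ^ m₂) '' (wlevel β U m₂ * U') := Set.image_mono hCO
      _ ⊆ (⇑(β ^ m₂) '' wlevel β U m₂) * (⇑(β ^ m₂) '' U') := image_mul_subset _ _ _
      _ ⊆ vminus β U * (⇑(β ^ m₂) '' U') :=
          Set.mul_subset_mul (hpow_wlevel le_rfl) Set.Subset.rfl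
      _ ⊆ vminus β U * (⇑(β ^ m₁) '' U') := hdesc m₂ (le_max_right _ _)
  have hzOrb : z ∈ closure Orb := subset_closure ⟨0, by simp⟩
  have hzim : z ∈ ⇑(β ^ m₂) '' closure Orb := by
    rw [hCpow m₂]
    exact hzOrb
  exact h9 hzim


end Main2

lemma contraSet_closure_isCompact [LocallyCompactSpace G] [TotallyDisconnectedSpace G]
    (β : MulAut G) (hβ : Continuous ⇑β) (hβ' : Continuous ⇑(β⁻¹)) :
    IsCompact (closure (contraSet β)) := by
  obtain ⟨U, hUc, hUo⟩ := exists_compact_open_subgroup (G := G)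
  obtain ⟨F, hFc, hF⟩ := contra_bounded hβ hβ' hUc hUo
  have hsub : contraSet β ⊆ F := fun z hz => hF z hz.1 hz.2
  exact hFc.of_isClosed_subset isClosed_closure (closure_minimal hsub hFc.isClosed)

end NubAux

theorem stmt4 [LocallyCompactSpace G] [TotallyDisconnectedSpace G] [T2Space G]
    (α β : MulAut G) (hα : Continuous ⇑α) (hα' : Continuous ⇑(α⁻¹))
    (hβ : Continuous ⇑β) (hβ' : Continuous ⇑(β⁻¹)) (hcomm : Commute α β)
    (K : Set G)
    (hK : K = closure {g : G |
      Filter.Tendsto (fun j : ℕ => (β ^ j) g) Filter.atTop (nhds 1) ∧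
      IsCompact (closure (Set.range fun j : ℕ => (β⁻¹ ^ j) g))}) :
    IsCompact K ∧ (∃ Ksub : Subgroup G, (Ksub : Set G) = K) ∧ ⇑α '' K = K := by
  have hS : K = closure (contraSet β) := hK
  refine ⟨?_, ⟨(contraSub β).topologicalClosure, ?_⟩, ?_⟩
  · rw [hS]
    exact contraSet_closure_isCompact β hβ hβ'
  · rw [hS]
    rfl
  · rw [hS]
    have he := (mulAutHomeo α hα hα').image_closure (contraSet β)
    have hcoe : ⇑(mulAutHomeo α hα hα') = ⇑α := rfl
    rw [hcoe] at he
    rw [he, image_contraSet hα hα' hcomm]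
end

section
/- Let α and β be commuting automorphisms of G and let U be a compact open subgroup of G which is tidy for α and satisfies β(U) = U. Then U is tidy for the composite automorphism α∘β. -/
open scoped Pointwise

universe u

variable {G : Type u} [Group G] [TopologicalSpace G] [IsTopologicalGroup G]

lemma mulaut_image_mul (γ δ : MulAut G) (S : Set G) :
    ⇑(γ * δ) '' S = ⇑γ '' (⇑δ '' S) := by
  rw [Set.image_image]; rfl

lemma mulaut_pow_image_fixed (γ : MulAut G) (S : Set G) (h : ⇑γ '' S = S) (n : ℕ) :
    ⇑(γ ^ n) '' S = S := by
  induction n with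
  | zero => simp
  | succ n ih => rw [pow_succ, mulaut_image_mul, h, ih]

lemma mulaut_inv_image_fixed (γ : MulAut G) (S : Set G) (h : ⇑γ '' S = S) :
    ⇑γ⁻¹ '' S = S := by
  conv_lhs => rw [← h]
  rw [Set.image_image]
  simp

lemma image_plusSet_fixed (α γ : MulAut G) (S : Set G) (hc : Commute α γ)
    (h : ⇑γ '' S = S) : ⇑γ '' plusSet α S = plusSet α S := by
  unfold plusSet
  rw [Set.image_iInter (MulEquiv.bijective γ)]
  refine Set.iInter_congr fun k => ?_
  rw [← mulaut_image_mul, (hc.symm.pow_right k).eq, mulaut_image_mul, h]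

theorem stmt17 [LocallyCompactSpace G] [TotallyDisconnectedSpace G] [T2Space G]
    (α β : MulAut G) (hα : Continuous ⇑α) (hα' : Continuous ⇑(α⁻¹))
    (hβ : Continuous ⇑β) (hβ' : Continuous ⇑(β⁻¹)) (hcomm : Commute α β)
    (U : Subgroup G) (hUc : IsCompact (U : Set G)) (hUo : IsOpen (U : Set G))
    (htidy : IsTidy α (U : Set G)) (hβU : ⇑β '' (U : Set G) = U) :
    IsTidy (α * β) (U : Set G) := by
  obtain ⟨hT1, hT2⟩ := htidy
  have hβn : ∀ n : ℕ, ⇑(β ^ n) '' (U : Set G) = U :=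
    mulaut_pow_image_fixed β _ hβU
  have hβ'U : ⇑β⁻¹ '' (U : Set G) = U := mulaut_inv_image_fixed β _ hβU
  have hβ'n : ∀ n : ℕ, ⇑(β⁻¹ ^ n) '' (U : Set G) = U :=
    mulaut_pow_image_fixed β⁻¹ _ hβ'U
  have hplus : plusSet (α * β) (U : Set G) = plusSet α U := by
    unfold plusSet
    refine Set.iInter_congr fun n => ?_
    rw [hcomm.mul_pow, mulaut_image_mul, hβn]
  have hminus : minusSet (α * β) (U : Set G) = minusSet α U := by
    unfold minusSet
    refine Set.iInter_congr fun n => ?_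
    rw [mul_inv_rev, ← hcomm.inv_inv.eq, hcomm.inv_inv.mul_pow,
      mulaut_image_mul, hβ'n]
  have hpp : plusplusSet (α * β) (U : Set G) = plusplusSet α U := by
    unfold plusplusSet
    rw [hplus]
    refine Set.iUnion_congr fun n => ?_
    rw [hcomm.mul_pow, mulaut_image_mul,
      image_plusSet_fixed α (β ^ n) _ (hcomm.pow_right n) (hβn n)]
  exact ⟨by rw [hplus, hminus, ← hT1], by rw [hpp]; exact hT2⟩
end
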